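/- arXiv:2507.10872 — 5 statements merged into one kernel-verified Lean document; each statement's English description precedes it below -/
import Mathlib

section
/- Let x be a feasible allocation and suppose (p, w, t, x) is a with-tip equilibrium with all tips zero, t = 0. Then (p, w̄, t, x) is also a with-tip equilibrium, where w̄ are the delivery compensations of a courier plan serving Ω_x with w̄_{bs} = 0 for (b,s) ∉ Ω_x under which every courier attains the maximal courier-plan utility ū_d. -/
open scoped Classical
noncomputable section

namespace DeliveryPlatform

variable {m n l : ℕ}

/-- A (three-sided) allocation `x` is feasible if each buyer, each store and each
courier appears in at most one executed triple. -/
def Feasible (x : Fin m → Fin n → Fin l → Bool) : Prop :=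
  (∀ b s d s' d', x b s d → x b s' d' → s = s' ∧ d = d') ∧
  (∀ b s d b' d', x b s d → x b' s d' → b = b' ∧ d = d') ∧
  (∀ b s d b' s', x b s d → x b' s' d → b = b' ∧ s = s')

/-- The welfare of an allocation: `W(x) = Σ x_{bsd} (v_b(s) − c_d(b,s))`. -/
def Welfare (v : Fin m → Fin n → ℝ) (c : Fin l → Fin m → Fin n → ℝ)
    (x : Fin m → Fin n → Fin l → Bool) : ℝ :=
  ∑ b, ∑ s, ∑ d, if x b s d then v b s - c d b s else 0

/-- The optimal welfare over all feasible allocations. -/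
def OPT (v : Fin m → Fin n → ℝ) (c : Fin l → Fin m → Fin n → ℝ) : ℝ :=
  sSup {r : ℝ | ∃ x, Feasible x ∧ Welfare v c x = r}

/-- Utility of courier `d` from delivering the order `(b,s)`:
`w_{bs} + t_{bs} − c_d(b,s)`. -/
def cUtil (c : Fin l → Fin m → Fin n → ℝ) (w t : Fin m → Fin n → ℝ)
    (d : Fin l) (b : Fin m) (s : Fin n) : ℝ :=
  w b s + t b s - c d b s

/-- `(b,s) ∈ BR_d(w,t)`: the order `(b,s)` is utility-maximizing for courier `d`
and has nonnegative utility. -/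
def InBR (c : Fin l → Fin m → Fin n → ℝ) (w t : Fin m → Fin n → ℝ)
    (d : Fin l) (b : Fin m) (s : Fin n) : Prop :=
  0 ≤ cUtil c w t d b s ∧ ∀ b' s', cUtil c w t d b' s' ≤ cUtil c w t d b s

/-- Replace buyer `b`'s tip vector by `tb`, keeping the tips of all other
buyers (`t_{−b}`) fixed. -/
def updateTips (t : Fin m → Fin n → ℝ) (b : Fin m) (tb : Fin n → ℝ) :
    Fin m → Fin n → ℝ :=
  fun b' s' => if b' = b then tb s' else t b' s'

/-- The minimum tip `t̲_{bs}(w, t_{−b})`: the smallest nonnegative tip that buyer `b`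
can attach to the order `(b,s)` (as part of some nonnegative tip vector)
so that `(b,s) ∈ BR_d` for some courier `d`. -/
def minTip (c : Fin l → Fin m → Fin n → ℝ) (w t : Fin m → Fin n → ℝ)
    (b : Fin m) (s : Fin n) : ℝ :=
  sInf {τ : ℝ | 0 ≤ τ ∧ ∃ tb : Fin n → ℝ, (∀ s', 0 ≤ tb s') ∧ tb s = τ ∧
    ∃ d, InBR c w (updateTips t b tb) d b s}

/-- A with-tip equilibrium `(p, w, t, x)`. -/
def WithTipEq (v : Fin m → Fin n → ℝ) (c : Fin l → Fin m → Fin n → ℝ)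
    (p : Fin n → ℝ) (w t : Fin m → Fin n → ℝ)
    (x : Fin m → Fin n → Fin l → Bool) : Prop :=
  Feasible x ∧
  (∀ s, 0 ≤ p s) ∧ (∀ b s, 0 ≤ w b s) ∧ (∀ b s, 0 ≤ t b s) ∧
  -- every matched buyer buys from a utility-maximizing store, with nonnegative
  -- utility, and pays exactly the minimum tip for the store she buys from
  (∀ b s, (∃ d, x b s d) →
    0 ≤ v b s - p s - minTip c w t b s ∧
    (∀ s', v b s' - p s' - minTip c w t b s' ≤ v b s - p s - minTip c w t b s) ∧
    t b s = minTip c w t b s) ∧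
  -- an unmatched buyer finds no store of positive utility
  (∀ b, (∀ s d, ¬ x b s d) → ∀ s, v b s - p s - minTip c w t b s ≤ 0) ∧
  -- every courier delivers an order in BR_d(w,t)
  (∀ d b s, x b s d → InBR c w t d b s) ∧
  (∀ d, (∀ b s, ¬ x b s d) → ∀ b s, cUtil c w t d b s ≤ 0) ∧
  -- stores not bought from have zero purchase price
  (∀ s, (∀ b d, ¬ x b s d) → p s = 0) ∧
  -- orders not delivered have zero compensation and zero tip
  (∀ b s, (∀ d, ¬ x b s d) → w b s = 0 ∧ t b s = 0)

/-- A without-tip equilibrium `(p, w, x)`. -/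
def WithoutTipEq (v : Fin m → Fin n → ℝ) (c : Fin l → Fin m → Fin n → ℝ)
    (p : Fin n → ℝ) (w : Fin m → Fin n → ℝ)
    (x : Fin m → Fin n → Fin l → Bool) : Prop :=
  Feasible x ∧
  (∀ s, 0 ≤ p s) ∧ (∀ b s, 0 ≤ w b s) ∧
  (∀ b s, (∃ d, x b s d) →
    0 ≤ v b s - p s ∧ ∀ s', v b s' - p s' ≤ v b s - p s) ∧
  (∀ b, (∀ s d, ¬ x b s d) → ∀ s, v b s - p s ≤ 0) ∧
  (∀ d b s, x b s d →
    0 ≤ w b s - c d b s ∧ ∀ b' s', w b' s' - c d b' s' ≤ w b s - c d b s) ∧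
  (∀ d, (∀ b s, ¬ x b s d) → ∀ b s, w b s - c d b s ≤ 0) ∧
  (∀ s, (∀ b d, ¬ x b s d) → p s = 0) ∧
  (∀ b s, (∀ d, ¬ x b s d) → w b s = 0)

/-- A courier allocation: a matching in the bipartite graph `G_D` between orders
and couriers, in which additionally no buyer and no store appears in more than
one matched order. -/
def CourierAlloc (y : Fin m × Fin n → Fin l → Bool) : Prop :=
  (∀ d o o', y o d → y o' d → o = o') ∧
  (∀ o d d', y o d → y o d' → d = d') ∧
  (∀ o d o' d', y o d → y o' d' → o.1 = o'.1 → o = o') ∧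
  (∀ o d o' d', y o d → y o' d' → o.2 = o'.2 → o = o')

/-- Total delivery cost of a courier allocation. -/
def totalCost (c : Fin l → Fin m → Fin n → ℝ)
    (y : Fin m × Fin n → Fin l → Bool) : ℝ :=
  ∑ o, ∑ d, if y o d then c d o.1 o.2 else 0

/-- The courier allocation `y` covers the set of orders `Ω`. -/
def Covers (Ω : Finset (Fin m × Fin n)) (y : Fin m × Fin n → Fin l → Bool) : Prop :=
  ∀ o ∈ Ω, ∃ d, y o d

/-- The courier allocation `y` serves `Ω`: exactly the orders of `Ω` are delivered. -/
def Serves (Ω : Finset (Fin m × Fin n)) (y : Fin m × Fin n → Fin l → Bool) : Prop :=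
  ∀ o, (∃ d, y o d) ↔ o ∈ Ω

/-- `C_Ω(G_D)`: the minimum total cost of a courier allocation covering `Ω`. -/
def minCost (c : Fin l → Fin m → Fin n → ℝ) (Ω : Finset (Fin m × Fin n)) : ℝ :=
  sInf {r : ℝ | ∃ y, CourierAlloc y ∧ Covers Ω y ∧ totalCost c y = r}

/-- `C_Ω(G_D \ d₀)`: the minimum total cost of a courier allocation covering `Ω`
in which courier `d₀` is unused. -/
def minCostWithout (c : Fin l → Fin m → Fin n → ℝ) (Ω : Finset (Fin m × Fin n))
    (d0 : Fin l) : ℝ :=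
  sInf {r : ℝ | ∃ y, CourierAlloc y ∧ Covers Ω y ∧ (∀ o, ¬ y o d0) ∧
    totalCost c y = r}

/-- A courier plan `(w, y)`: every matched courier delivers a utility-maximizing
order with nonnegative utility, and every unmatched courier has no order of
positive utility. -/
def CourierPlan (c : Fin l → Fin m → Fin n → ℝ) (w : Fin m × Fin n → ℝ)
    (y : Fin m × Fin n → Fin l → Bool) : Prop :=
  CourierAlloc y ∧ (∀ o, 0 ≤ w o) ∧
  (∀ d o, y o d →
    0 ≤ w o - c d o.1 o.2 ∧ ∀ o', w o' - c d o'.1 o'.2 ≤ w o - c d o.1 o.2) ∧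
  (∀ d, (∀ o, ¬ y o d) → ∀ o, w o - c d o.1 o.2 ≤ 0)

/-- Utility of courier `d` in the courier plan `(w, y)` (zero if unmatched). -/
def planUtil (c : Fin l → Fin m → Fin n → ℝ) (w : Fin m × Fin n → ℝ)
    (y : Fin m × Fin n → Fin l → Bool) (d : Fin l) : ℝ :=
  ∑ o, if y o d then w o - c d o.1 o.2 else 0

/-- In `Ω`, every buyer and every store appears at most once. -/
def PairwiseDistinct (Ω : Finset (Fin m × Fin n)) : Prop :=
  (∀ o ∈ Ω, ∀ o' ∈ Ω, Prod.fst o = Prod.fst o' → o = o') ∧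
  (∀ o ∈ Ω, ∀ o' ∈ Ω, Prod.snd o = Prod.snd o' → o = o')

/-- `Ω_x`: the set of orders delivered under the allocation `x`. -/
def OrdersOf (x : Fin m → Fin n → Fin l → Bool) : Finset (Fin m × Fin n) :=
  Finset.univ.filter fun o => ∃ d, x o.1 o.2 d

/-! STATEMENT 9 (Lemma 4.2): If `(p, w, 0, x)` is a with-tip equilibrium with all
tips zero, then replacing `w` by the compensations `w̄` of a courier plan serving
`Ω_x` (zero outside `Ω_x`) under which every courier attains the maximal
courier-plan utility `ū_d` again yields a with-tip equilibrium. -/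

/-! ### Auxiliary lemmas -/

lemma planUtil_eq_of (c : Fin l → Fin m → Fin n → ℝ) (W : Fin m × Fin n → ℝ)
    (z : Fin m × Fin n → Fin l → Bool) (halloc : CourierAlloc z)
    {o : Fin m × Fin n} {d : Fin l} (hod : z o d) :
    planUtil c W z d = W o - c d o.1 o.2 := by
  unfold planUtil
  rw [Finset.sum_eq_single_of_mem o (Finset.mem_univ o)]
  · simp [hod]
  · intro o' _ hne
    by_cases hz : z o' d
    · exact absurd (halloc.1 d o' o hz hod) hne
    · simp [hz]

lemma planUtil_eq_zero (c : Fin l → Fin m → Fin n → ℝ) (W : Fin m × Fin n → ℝ)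
    (z : Fin m × Fin n → Fin l → Bool) (d : Fin l) (hd : ∀ o, ¬ z o d) :
    planUtil c W z d = 0 := by
  unfold planUtil
  exact Finset.sum_eq_zero fun o _ => by simp [hd o]

lemma plan_ub (c : Fin l → Fin m → Fin n → ℝ) (W : Fin m × Fin n → ℝ)
    (z : Fin m × Fin n → Fin l → Bool) (hplan : CourierPlan c W z)
    (d : Fin l) (o : Fin m × Fin n) :
    W o - c d o.1 o.2 ≤ planUtil c W z d := by
  by_cases hd : ∃ o₁, z o₁ d
  · obtain ⟨o₁, h₁⟩ := hd
    rw [planUtil_eq_of c W z hplan.1 h₁]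
    exact (hplan.2.2.1 d o₁ h₁).2 o
  · push_neg at hd
    rw [planUtil_eq_zero c W z d hd]
    exact hplan.2.2.2 d hd o

lemma plan_nonneg (c : Fin l → Fin m → Fin n → ℝ) (W : Fin m × Fin n → ℝ)
    (z : Fin m × Fin n → Fin l → Bool) (hplan : CourierPlan c W z) (d : Fin l) :
    0 ≤ planUtil c W z d := by
  by_cases hd : ∃ o₁, z o₁ d
  · obtain ⟨o₁, h₁⟩ := hd
    rw [planUtil_eq_of c W z hplan.1 h₁]
    exact (hplan.2.2.1 d o₁ h₁).1
  · push_neg at hd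
    rw [planUtil_eq_zero c W z d hd]

lemma planUtil_le_planUtil (c : Fin l → Fin m → Fin n → ℝ) (W : Fin m × Fin n → ℝ)
    {z z' : Fin m × Fin n → Fin l → Bool} (hplan : CourierPlan c W z)
    (halloc' : CourierAlloc z') (d : Fin l) :
    planUtil c W z' d ≤ planUtil c W z d := by
  by_cases hd : ∃ o₁, z' o₁ d
  · obtain ⟨o₁, h₁⟩ := hd
    rw [planUtil_eq_of c W z' halloc' h₁]
    exact plan_ub c W z hplan d o₁
  · push_neg at hd
    rw [planUtil_eq_zero c W z' d hd]
    exact plan_nonneg c W z hplan d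

lemma sum_planUtil (c : Fin l → Fin m → Fin n → ℝ) (W : Fin m × Fin n → ℝ)
    (z : Fin m × Fin n → Fin l → Bool) (Ω : Finset (Fin m × Fin n))
    (halloc : CourierAlloc z) (hserve : Serves Ω z) :
    ∑ d, planUtil c W z d = (∑ o ∈ Ω, W o) - totalCost c z := by
  unfold planUtil totalCost
  rw [Finset.sum_comm]
  have key : ∀ o : Fin m × Fin n,
      (∑ d, if z o d then W o - c d o.1 o.2 else 0)
        = (if o ∈ Ω then W o else 0) - ∑ d, (if z o d then c d o.1 o.2 else 0) := by
    intro o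
    by_cases ho : o ∈ Ω
    · obtain ⟨d₀, hd₀⟩ := (hserve o).2 ho
      rw [Finset.sum_eq_single_of_mem d₀ (Finset.mem_univ d₀)
          (fun d' _ hne => by
            by_cases hz : z o d'
            · exact absurd (halloc.2.1 o d' d₀ hz hd₀) hne
            · simp [hz]),
        Finset.sum_eq_single_of_mem d₀ (Finset.mem_univ d₀)
          (fun d' _ hne => by
            by_cases hz : z o d'
            · exact absurd (halloc.2.1 o d' d₀ hz hd₀) hne
            · simp [hz])]
      simp [hd₀, ho]
    · have hno : ∀ d, ¬ z o d := fun d hz => ho ((hserve o).1 ⟨d, hz⟩)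
      simp [hno, ho]
  rw [Finset.sum_congr rfl (fun o _ => key o), Finset.sum_sub_distrib]
  congr 1
  simp [Finset.sum_ite_mem]

/-- Lemma 4.2: If `(p, w, 0, x)` is a with-tip equilibrium with all
tips zero, then replacing `w` by the compensations `w̄` of a courier plan serving
`Ω_x` (zero outside `Ω_x`) under which every courier attains the maximal
courier-plan utility `ū_d` again yields a with-tip equilibrium. -/
theorem highest_courier_compensation_eq
    (v : Fin m → Fin n → ℝ) (c : Fin l → Fin m → Fin n → ℝ)
    (hv : ∀ b s, 0 ≤ v b s) (hc : ∀ d b s, 0 ≤ c d b s)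
    (p : Fin n → ℝ) (w : Fin m → Fin n → ℝ) (x : Fin m → Fin n → Fin l → Bool)
    (h : WithTipEq v c p w (fun _ _ => 0) x)
    (wbar : Fin m × Fin n → ℝ) (y : Fin m × Fin n → Fin l → Bool)
    (hplan : CourierPlan c wbar y) (hserve : Serves (OrdersOf x) y)
    (hzero : ∀ o ∉ OrdersOf x, wbar o = 0)
    (hlt : (OrdersOf x).card < l → ∀ d,
      planUtil c wbar y d = minCostWithout c (OrdersOf x) d - minCost c (OrdersOf x))
    (heq : (OrdersOf x).card = l → ∀ d b s, v b s ≤ planUtil c wbar y d) :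
    WithTipEq v c p (fun b s => wbar (b, s)) (fun _ _ => 0) x := by
  obtain ⟨hfeas, hp, hw0, -, hbuy, hbuyn, hcour, hcourn, hps, hwz⟩ := h
  set Ω : Finset (Fin m × Fin n) := OrdersOf x with hΩdef
  have hΩmem : ∀ o : Fin m × Fin n, o ∈ Ω ↔ ∃ d, x o.1 o.2 d := by
    intro o; simp [hΩdef, OrdersOf]
  set yx : Fin m × Fin n → Fin l → Bool := fun o d => x o.1 o.2 d with hyxdef
  set wf : Fin m × Fin n → ℝ := fun o => w o.1 o.2 with hwfdef
  have hyx_alloc : CourierAlloc yx := by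
    refine ⟨?_, ?_, ?_, ?_⟩
    · intro d o o' ho ho'
      obtain ⟨hb, hs⟩ := hfeas.2.2 o.1 o.2 d o'.1 o'.2 ho ho'
      exact Prod.ext_iff.2 ⟨hb, hs⟩
    · intro o d d' ho ho'
      exact (hfeas.1 o.1 o.2 d o.2 d' ho ho').2
    · intro o d o' d' ho ho' h1
      have h2 := hfeas.1 o.1 o.2 d o'.2 d' ho (by rw [h1]; exact ho')
      exact Prod.ext_iff.2 ⟨h1, h2.1⟩
    · intro o d o' d' ho ho' h2
      have h1 := hfeas.2.1 o.1 o.2 d o'.1 d' ho (by rw [h2]; exact ho')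
      exact Prod.ext_iff.2 ⟨h1.1, h2⟩
  have hyx_serves : Serves Ω yx := fun o => (hΩmem o).symm
  have hyx_plan : CourierPlan c wf yx := by
    refine ⟨hyx_alloc, fun o => hw0 o.1 o.2, ?_, ?_⟩
    · intro d o hod
      have hbr := hcour d o.1 o.2 hod
      have h1 : 0 ≤ w o.1 o.2 + 0 - c d o.1 o.2 := hbr.1
      constructor
      · show (0:ℝ) ≤ w o.1 o.2 - c d o.1 o.2
        linarith
      · intro o'
        have h2 : w o'.1 o'.2 + 0 - c d o'.1 o'.2 ≤ w o.1 o.2 + 0 - c d o.1 o.2 :=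
          hbr.2 o'.1 o'.2
        show w o'.1 o'.2 - c d o'.1 o'.2 ≤ w o.1 o.2 - c d o.1 o.2
        linarith
    · intro d hd o
      have h1 : w o.1 o.2 + 0 - c d o.1 o.2 ≤ 0 :=
        hcourn d (fun b s hbs => hd (b, s) hbs) o.1 o.2
      show w o.1 o.2 - c d o.1 o.2 ≤ (0:ℝ)
      linarith
  have hU'ub : ∀ d o, wf o - c d o.1 o.2 ≤ planUtil c wf yx d := plan_ub c wf yx hyx_plan
  have hUbub : ∀ d (o : Fin m × Fin n), wbar o - c d o.1 o.2 ≤ planUtil c wbar y d :=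
    plan_ub c wbar y hplan
  have hcost : totalCost c y = totalCost c yx := by
    have h1 : ∑ d, planUtil c wf y d ≤ ∑ d, planUtil c wf yx d :=
      Finset.sum_le_sum fun d _ => planUtil_le_planUtil c wf hyx_plan hplan.1 d
    have h2 : ∑ d, planUtil c wbar yx d ≤ ∑ d, planUtil c wbar y d :=
      Finset.sum_le_sum fun d _ => planUtil_le_planUtil c wbar hplan hyx_alloc d
    rw [sum_planUtil c wf y Ω hplan.1 hserve,
      sum_planUtil c wf yx Ω hyx_alloc hyx_serves] at h1
    rw [sum_planUtil c wbar yx Ω hyx_alloc hyx_serves,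
      sum_planUtil c wbar y Ω hplan.1 hserve] at h2
    linarith
  have hterm : ∀ d, planUtil c wbar yx d = planUtil c wbar y d := by
    have hsum : ∑ d, planUtil c wbar yx d = ∑ d, planUtil c wbar y d := by
      rw [sum_planUtil c wbar yx Ω hyx_alloc hyx_serves,
        sum_planUtil c wbar y Ω hplan.1 hserve, hcost]
    intro d
    exact (Finset.sum_eq_sum_iff_of_le
      (fun i _ => planUtil_le_planUtil c wbar hplan hyx_alloc i)).1 hsum d (Finset.mem_univ d)
  have hcour' : ∀ d b s, x b s d → InBR c (fun b s => wbar (b, s)) (fun _ _ => 0) d b s := by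
    intro d b s hx
    have hyxo : yx (b, s) d := hx
    have heqd : wbar (b, s) - c d b s = planUtil c wbar y d := by
      rw [← hterm d, planUtil_eq_of c wbar yx hyx_alloc hyxo]
    constructor
    · have h0 := plan_nonneg c wbar y hplan d
      show (0:ℝ) ≤ wbar (b, s) + 0 - c d b s
      linarith
    · intro b' s'
      have h1 : wbar (b', s') - c d b' s' ≤ planUtil c wbar y d := hUbub d (b', s')
      show wbar (b', s') + 0 - c d b' s' ≤ wbar (b, s) + 0 - c d b s
      linarith
  have hcourn' : ∀ d, (∀ b s, ¬ x b s d) →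
      ∀ b s, cUtil c (fun b s => wbar (b, s)) (fun _ _ => 0) d b s ≤ 0 := by
    intro d hd b s
    have h0 : planUtil c wbar y d = 0 := by
      rw [← hterm d]; exact planUtil_eq_zero c wbar yx d (fun o => hd o.1 o.2)
    have h1 : wbar (b, s) - c d b s ≤ planUtil c wbar y d := hUbub d (b, s)
    show wbar (b, s) + 0 - c d b s ≤ (0:ℝ)
    linarith
  have hminnn : ∀ (W : Fin m → Fin n → ℝ) b s, 0 ≤ minTip c W (fun _ _ => 0) b s :=
    fun W b s => Real.sInf_nonneg fun τ hτ => hτ.1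
  have hminTip_new_zero : ∀ b s, (b, s) ∈ Ω →
      minTip c (fun b s => wbar (b, s)) (fun _ _ => 0) b s = 0 := by
    intro b s ho
    obtain ⟨d, hd⟩ := (hserve (b, s)).2 ho
    have hbr := hplan.2.2.1 d (b, s) hd
    have hBR : InBR c (fun b s => wbar (b, s))
        (updateTips (fun _ _ => 0) b (fun _ => 0)) d b s := by
      have hzt : updateTips (fun _ _ => (0:ℝ)) b (fun (_ : Fin n) => (0:ℝ))
          = fun (_ : Fin m) (_ : Fin n) => (0:ℝ) := by
        funext b' s'; simp [updateTips]
      rw [hzt]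
      constructor
      · have h1 : (0:ℝ) ≤ wbar (b, s) - c d b s := hbr.1
        show (0:ℝ) ≤ wbar (b, s) + 0 - c d b s
        linarith
      · intro b' s'
        have h2 : wbar (b', s') - c d b' s' ≤ wbar (b, s) - c d b s := hbr.2 (b', s')
        show wbar (b', s') + 0 - c d b' s' ≤ wbar (b, s) + 0 - c d b s
        linarith
    refine le_antisymm ?_ (hminnn _ b s)
    exact csInf_le ⟨0, fun τ hτ => hτ.1⟩
      ⟨le_refl 0, fun _ => 0, fun s' => le_refl 0, rfl, d, hBR⟩
  have hlb : ∀ b s (τ : ℝ), (∃ tb : Fin n → ℝ, (∀ s', 0 ≤ tb s') ∧ tb s = τ ∧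
      ∃ d, InBR c (fun b s => wbar (b, s)) (updateTips (fun _ _ => 0) b tb) d b s) →
      ∃ d, planUtil c wbar y d + c d b s - wbar (b, s) ≤ τ := by
    rintro b s τ ⟨tb, htb0, htbs, d, hBR⟩
    refine ⟨d, ?_⟩
    have hutil : cUtil c (fun b s => wbar (b, s)) (updateTips (fun _ _ => 0) b tb) d b s
        = wbar (b, s) + tb s - c d b s := by simp [cUtil, updateTips]
    have h2 : planUtil c wbar y d ≤ wbar (b, s) + tb s - c d b s := by
      by_cases hd : ∃ o₁, y o₁ d
      · obtain ⟨o₁, h₁⟩ := hd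
        rw [planUtil_eq_of c wbar y hplan.1 h₁]
        have h3 := hBR.2 o₁.1 o₁.2
        rw [hutil] at h3
        have h4 : 0 ≤ updateTips (fun _ _ => 0) b tb o₁.1 o₁.2 := by
          simp only [updateTips]; split_ifs
          exacts [htb0 _, le_refl 0]
        have h5 : cUtil c (fun b s => wbar (b, s)) (updateTips (fun _ _ => 0) b tb) d o₁.1 o₁.2
            = wbar o₁ + updateTips (fun _ _ => 0) b tb o₁.1 o₁.2 - c d o₁.1 o₁.2 := rfl
        rw [h5] at h3
        linarith
      · push_neg at hd
        rw [planUtil_eq_zero c wbar y d hd]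
        have h3 := hBR.1
        rw [hutil] at h3
        linarith
    rw [htbs] at h2
    linarith
  have hub_old : ∀ b s d, minTip c w (fun _ _ => 0) b s ≤
      planUtil c wf yx d + c d b s - w b s := by
    intro b s d
    have hwub : w b s - c d b s ≤ planUtil c wf yx d := hU'ub d (b, s)
    have hτ0 : 0 ≤ planUtil c wf yx d + c d b s - w b s := by linarith
    apply csInf_le ⟨0, fun τ hτ => hτ.1⟩
    refine ⟨hτ0, fun s'' => if s'' = s then planUtil c wf yx d + c d b s - w b s else 0,
      fun s'' => by dsimp only; split_ifs; exacts [hτ0, le_refl 0], by simp, d, ?_, ?_⟩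
    · have hL : cUtil c w (updateTips (fun _ _ => 0) b
          (fun s'' => if s'' = s then planUtil c wf yx d + c d b s - w b s else 0)) d b s
          = w b s + (planUtil c wf yx d + c d b s - w b s) - c d b s := by
        simp [cUtil, updateTips]
      rw [hL]
      have h0 := plan_nonneg c wf yx hyx_plan d
      linarith
    · intro b'' s''
      by_cases hbs : b'' = b ∧ s'' = s
      · obtain ⟨hb1, hs1⟩ := hbs; subst hb1; subst hs1; exact le_refl _
      · have htip : updateTips (fun _ _ => (0:ℝ)) b
            (fun s'' => if s'' = s then planUtil c wf yx d + c d b s - w b s else 0) b'' s'' = 0 := by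
          by_cases hb1 : b'' = b
          · have hs1 : ¬ s'' = s := fun hs1 => hbs ⟨hb1, hs1⟩
            simp [updateTips, hb1, hs1]
          · simp [updateTips, hb1]
        have hL : cUtil c w (updateTips (fun _ _ => 0) b
            (fun s'' => if s'' = s then planUtil c wf yx d + c d b s - w b s else 0)) d b'' s''
            = w b'' s'' + 0 - c d b'' s'' := by
          rw [cUtil, htip]
        have hR : cUtil c w (updateTips (fun _ _ => 0) b
            (fun s'' => if s'' = s then planUtil c wf yx d + c d b s - w b s else 0)) d b s
            = w b s + (planUtil c wf yx d + c d b s - w b s) - c d b s := by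
          simp [cUtil, updateTips]
        rw [hL, hR]
        have h1 : w b'' s'' - c d b'' s'' ≤ planUtil c wf yx d := hU'ub d (b'', s'')
        linarith
  -- The key comparison for buyers
  have hkey : ∀ b s', (b, s') ∉ Ω → ∀ r : ℝ,
      v b s' - p s' - minTip c w (fun _ _ => 0) b s' ≤ r → 0 ≤ r →
      v b s' - p s' - minTip c (fun b s => wbar (b, s)) (fun _ _ => 0) b s' ≤ r := by
    rcases Nat.eq_zero_or_pos l with hl0 | hlpos
    · intro b s' hns r hold hr
      have hes : ∀ (W : Fin m → Fin n → ℝ), minTip c W (fun _ _ => 0) b s' = 0 := by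
        intro W
        have hsetempty : {τ : ℝ | 0 ≤ τ ∧ ∃ tb : Fin n → ℝ, (∀ s'0, 0 ≤ tb s'0) ∧
            tb s' = τ ∧ ∃ d, InBR c W (updateTips (fun _ _ => 0) b tb) d b s'} = ∅ := by
          ext τ
          simp only [Set.mem_setOf_eq, Set.mem_empty_iff_false, iff_false, not_and]
          rintro - ⟨tb, -, -, d, -⟩
          exact absurd d.2 (by omega)
        show sInf _ = 0
        rw [hsetempty, Real.sInf_empty]
      rw [hes] at hold ⊢
      exact hold
    · -- there is at least one courier: the minimum-tip sets are nonempty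
      have hSne : ∀ (b : Fin m) (s : Fin n),
          Set.Nonempty {τ : ℝ | 0 ≤ τ ∧ ∃ tb : Fin n → ℝ, (∀ s', 0 ≤ tb s') ∧ tb s = τ ∧
            ∃ d, InBR c (fun b s => wbar (b, s)) (updateTips (fun _ _ => 0) b tb) d b s} := by
        intro b s
        set d₀ : Fin l := ⟨0, hlpos⟩ with hd₀def
        have hne : (Finset.univ : Finset (Fin m × Fin n)).Nonempty := ⟨(b, s), Finset.mem_univ _⟩
        set M := Finset.univ.sup' hne (fun o : Fin m × Fin n => wbar o - c d₀ o.1 o.2) with hM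
        set τ₀ := max 0 (max 0 M + c d₀ b s - wbar (b, s)) with hτ₀def
        have hτ₀0 : (0:ℝ) ≤ τ₀ := le_max_left _ _
        have hτ₀ge : max 0 M + c d₀ b s - wbar (b, s) ≤ τ₀ := le_max_right _ _
        refine ⟨τ₀, hτ₀0, fun s'' => if s'' = s then τ₀ else 0,
          fun s'' => by dsimp only; split_ifs; exacts [hτ₀0, le_refl 0], by simp, d₀, ?_, ?_⟩
        · have hL : cUtil c (fun b s => wbar (b, s)) (updateTips (fun _ _ => 0) b
              (fun s'' => if s'' = s then τ₀ else 0)) d₀ b s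
              = wbar (b, s) + τ₀ - c d₀ b s := by
            simp [cUtil, updateTips]
          rw [hL]
          have := le_max_left (0:ℝ) M
          linarith
        · intro b'' s''
          by_cases hbs : b'' = b ∧ s'' = s
          · obtain ⟨hb1, hs1⟩ := hbs; subst hb1; subst hs1; exact le_refl _
          · have htip : updateTips (fun _ _ => (0:ℝ)) b
                (fun s'' => if s'' = s then τ₀ else 0) b'' s'' = 0 := by
              by_cases hb1 : b'' = b
              · have hs1 : ¬ s'' = s := fun hs1 => hbs ⟨hb1, hs1⟩
                simp [updateTips, hb1, hs1]
              · simp [updateTips, hb1]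
            have hL : cUtil c (fun b s => wbar (b, s)) (updateTips (fun _ _ => 0) b
                (fun s'' => if s'' = s then τ₀ else 0)) d₀ b'' s''
                = wbar (b'', s'') + 0 - c d₀ b'' s'' := by
              rw [cUtil, htip]
            have hR : cUtil c (fun b s => wbar (b, s)) (updateTips (fun _ _ => 0) b
                (fun s'' => if s'' = s then τ₀ else 0)) d₀ b s
                = wbar (b, s) + τ₀ - c d₀ b s := by
              simp [cUtil, updateTips]
            rw [hL, hR]
            have hM' : wbar (b'', s'') - c d₀ b'' s'' ≤ M :=
              Finset.le_sup' (fun o : Fin m × Fin n => wbar o - c d₀ o.1 o.2)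
                (Finset.mem_univ (b'', s''))
            have := le_max_right (0:ℝ) M
            linarith
      by_cases hcard : Ω.card < l
      · -- strictly fewer orders than couriers: use the externality bound
        have hcost_nn : ∀ z : Fin m × Fin n → Fin l → Bool, 0 ≤ totalCost c z := by
          intro z
          apply Finset.sum_nonneg; intro o _
          apply Finset.sum_nonneg; intro d' _
          split_ifs
          exacts [hc d' o.1 o.2, le_refl 0]
        have hmain : ∀ d, planUtil c wf yx d ≤ planUtil c wbar y d := by
          intro d
          rw [hlt hcard d]
          have hbdd : BddBelow {r : ℝ | ∃ y', CourierAlloc y' ∧ Covers Ω y' ∧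
              totalCost c y' = r} := ⟨0, by rintro r ⟨y', -, -, rfl⟩; exact hcost_nn y'⟩
          have hmc_le : minCost c Ω ≤ totalCost c yx :=
            csInf_le hbdd ⟨yx, hyx_alloc, fun o ho => (hΩmem o).1 ho, rfl⟩
          -- construct an allocation covering Ω avoiding d
          have hcard2 : Fintype.card {o // o ∈ Ω} ≤ Fintype.card {d' : Fin l // d' ≠ d} := by
            rw [Fintype.card_coe,
              show Fintype.card {d' : Fin l // d' ≠ d} = l - 1 by
                simp [Fintype.card_subtype_compl]]
            omega
          obtain ⟨f⟩ := Function.Embedding.nonempty_iff_card_le.2 hcard2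
          set z : Fin m × Fin n → Fin l → Bool :=
            fun o d' => decide (∃ ho : o ∈ Ω, (f ⟨o, ho⟩ : Fin l) = d') with hzdef
          have hz_spec : ∀ o d', z o d' ↔ ∃ ho : o ∈ Ω, (f ⟨o, ho⟩ : Fin l) = d' := by
            intro o d'; simp [hzdef]
          have hΩbuyer : ∀ o ∈ Ω, ∀ o' ∈ Ω, Prod.fst o = Prod.fst o' → o = o' := by
            intro o ho o' ho' h1
            obtain ⟨dx, hdx⟩ := (hΩmem o).1 ho
            obtain ⟨dx', hdx'⟩ := (hΩmem o').1 ho'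
            have := hfeas.1 o.1 o.2 dx o'.2 dx' hdx (by rw [h1]; exact hdx')
            exact Prod.ext_iff.2 ⟨h1, this.1⟩
          have hΩstore : ∀ o ∈ Ω, ∀ o' ∈ Ω, Prod.snd o = Prod.snd o' → o = o' := by
            intro o ho o' ho' h2
            obtain ⟨dx, hdx⟩ := (hΩmem o).1 ho
            obtain ⟨dx', hdx'⟩ := (hΩmem o').1 ho'
            have := hfeas.2.1 o.1 o.2 dx o'.1 dx' hdx (by rw [h2]; exact hdx')
            exact Prod.ext_iff.2 ⟨this.1, h2⟩
          have hz_alloc : CourierAlloc z := by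
            refine ⟨?_, ?_, ?_, ?_⟩
            · intro d' o o' h1 h2
              obtain ⟨ho, hfo⟩ := (hz_spec o d').1 h1
              obtain ⟨ho', hfo'⟩ := (hz_spec o' d').1 h2
              have : f ⟨o, ho⟩ = f ⟨o', ho'⟩ := Subtype.ext (hfo.trans hfo'.symm)
              exact Subtype.ext_iff.1 (f.injective this)
            · intro o d' d'' h1 h2
              obtain ⟨ho, hfo⟩ := (hz_spec o d').1 h1
              obtain ⟨ho', hfo'⟩ := (hz_spec o d'').1 h2
              exact hfo.symm.trans hfo'
            · intro o d' o' d'' h1 h2 hb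
              obtain ⟨ho, -⟩ := (hz_spec o d').1 h1
              obtain ⟨ho', -⟩ := (hz_spec o' d'').1 h2
              exact hΩbuyer o ho o' ho' hb
            · intro o d' o' d'' h1 h2 hs
              obtain ⟨ho, -⟩ := (hz_spec o d').1 h1
              obtain ⟨ho', -⟩ := (hz_spec o' d'').1 h2
              exact hΩstore o ho o' ho' hs
          have hz_cov : Covers Ω z := fun o ho => ⟨f ⟨o, ho⟩, (hz_spec o _).2 ⟨ho, rfl⟩⟩
          have hz_nd : ∀ o, ¬ z o d := by
            intro o h1
            obtain ⟨ho, hfo⟩ := (hz_spec o d).1 h1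
            exact (f ⟨o, ho⟩).2 hfo
          have hset_ne : Set.Nonempty {r : ℝ | ∃ y', CourierAlloc y' ∧ Covers Ω y' ∧
              (∀ o, ¬ y' o d) ∧ totalCost c y' = r} :=
            ⟨totalCost c z, z, hz_alloc, hz_cov, hz_nd, rfl⟩
          have hset_fin : Set.Finite {r : ℝ | ∃ y', CourierAlloc y' ∧ Covers Ω y' ∧
              (∀ o, ¬ y' o d) ∧ totalCost c y' = r} :=
            Set.Finite.subset (Set.finite_range (totalCost c))
              (by rintro r ⟨y', -, -, -, rfl⟩; exact ⟨y', rfl⟩)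
          have hmw : minCostWithout c Ω d ∈ {r : ℝ | ∃ y', CourierAlloc y' ∧ Covers Ω y' ∧
              (∀ o, ¬ y' o d) ∧ totalCost c y' = r} := hset_ne.csInf_mem hset_fin
          obtain ⟨z₀, hz₀a, hz₀c, hz₀d, hz₀v⟩ := hmw
          set ζ : Fin m × Fin n → Fin l :=
            fun o => if h : ∃ d', z₀ o d' then h.choose else d with hζdef
          have hζ : ∀ o ∈ Ω, z₀ o (ζ o) := by
            intro o ho
            have h1 : ∃ d', z₀ o d' := hz₀c o ho
            simp only [hζdef, dif_pos h1]
            exact h1.choose_spec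
          have hζne : ∀ o ∈ Ω, ζ o ≠ d := fun o ho heqd => hz₀d o (by rw [← heqd]; exact hζ o ho)
          have hζinj : ∀ o ∈ Ω, ∀ o' ∈ Ω, ζ o = ζ o' → o = o' := by
            intro o ho o' ho' heqz
            exact hz₀a.1 (ζ o) o o' (hζ o ho) (by rw [heqz]; exact hζ o' ho')
          have s1 : ∑ o ∈ Ω, c (ζ o) o.1 o.2 ≤ totalCost c z₀ := by
            have hstep : ∀ o ∈ Ω, c (ζ o) o.1 o.2 ≤
                ∑ d', if z₀ o d' then c d' o.1 o.2 else 0 := by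
              intro o ho
              have := Finset.single_le_sum
                (f := fun d' => if z₀ o d' then c d' o.1 o.2 else 0)
                (fun d' _ => by split_ifs; exacts [hc _ _ _, le_refl 0])
                (Finset.mem_univ (ζ o))
              rwa [if_pos (hζ o ho)] at this
            calc ∑ o ∈ Ω, c (ζ o) o.1 o.2
                ≤ ∑ o ∈ Ω, ∑ d', (if z₀ o d' then c d' o.1 o.2 else 0) :=
                  Finset.sum_le_sum hstep
              _ ≤ ∑ o, ∑ d', (if z₀ o d' then c d' o.1 o.2 else 0) :=
                  Finset.sum_le_sum_of_subset_of_nonneg (Finset.subset_univ Ω)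
                    (fun o _ _ => Finset.sum_nonneg fun d' _ => by
                      split_ifs; exacts [hc _ _ _, le_refl 0])
          have s2 : ∑ o ∈ Ω, (wf o - c (ζ o) o.1 o.2) ≤ ∑ o ∈ Ω, planUtil c wf yx (ζ o) :=
            Finset.sum_le_sum fun o _ => hU'ub (ζ o) o
          have s3 : ∑ o ∈ Ω, planUtil c wf yx (ζ o) ≤
              (∑ d', planUtil c wf yx d') - planUtil c wf yx d := by
            calc ∑ o ∈ Ω, planUtil c wf yx (ζ o)
                = ∑ d' ∈ Ω.image ζ, planUtil c wf yx d' := (Finset.sum_image hζinj).symm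
              _ ≤ ∑ d' ∈ Finset.univ.erase d, planUtil c wf yx d' :=
                  Finset.sum_le_sum_of_subset_of_nonneg
                    (by
                      intro d' hd'
                      simp only [Finset.mem_image] at hd'
                      obtain ⟨o, ho, rfl⟩ := hd'
                      exact Finset.mem_erase.2 ⟨hζne o ho, Finset.mem_univ _⟩)
                    (fun d' _ _ => plan_nonneg c wf yx hyx_plan d')
              _ = (∑ d', planUtil c wf yx d') - planUtil c wf yx d :=
                  Finset.sum_erase_eq_sub (Finset.mem_univ d)
          have s4 : ∑ d', planUtil c wf yx d' = (∑ o ∈ Ω, wf o) - totalCost c yx :=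
            sum_planUtil c wf yx Ω hyx_alloc hyx_serves
          have s5 : ∑ o ∈ Ω, (wf o - c (ζ o) o.1 o.2)
              = (∑ o ∈ Ω, wf o) - ∑ o ∈ Ω, c (ζ o) o.1 o.2 := Finset.sum_sub_distrib _ _
          linarith
        have hmono : ∀ b s, (b, s) ∉ Ω → minTip c w (fun _ _ => 0) b s ≤
            minTip c (fun b s => wbar (b, s)) (fun _ _ => 0) b s := by
          intro b s hbs
          have hwe : w b s = 0 :=
            (hwz b s (fun d hd => hbs ((hΩmem (b, s)).2 ⟨d, hd⟩))).1
          have hwbe : wbar (b, s) = 0 := hzero (b, s) hbs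
          refine le_csInf (hSne b s) ?_
          intro τ hτ
          obtain ⟨d, hd⟩ := hlb b s τ hτ.2
          calc minTip c w (fun _ _ => 0) b s
              ≤ planUtil c wf yx d + c d b s - w b s := hub_old b s d
            _ ≤ planUtil c wbar y d + c d b s - wbar (b, s) := by
                rw [hwe, hwbe]; linarith [hmain d]
            _ ≤ τ := hd
        intro b s' hns r hold hr
        have := hmono b s' hns
        linarith
      · -- as many orders as couriers
        have hcardle : Ω.card ≤ l := by
          have h1 : Ω.card ≤ (Finset.univ : Finset (Fin l)).card := by
            apply Finset.card_le_card_of_injOn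
              (fun o => if h : ∃ d', yx o d' then h.choose else ⟨0, hlpos⟩)
              (fun o _ => Finset.mem_univ _)
            intro o ho o' ho' heq2
            have h1 : ∃ d', yx o d' := (hΩmem o).1 ho
            have h2 : ∃ d', yx o' d' := (hΩmem o').1 ho'
            dsimp only at heq2
            rw [dif_pos h1, dif_pos h2] at heq2
            exact hyx_alloc.1 _ o o' h1.choose_spec (by rw [heq2]; exact h2.choose_spec)
          simpa using h1
        have hcard_eq : Ω.card = l := le_antisymm hcardle (not_lt.1 hcard)
        intro b s' hns r hold hr
        have hwbe : wbar (b, s') = 0 := hzero (b, s') hns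
        have hvb : v b s' ≤ minTip c (fun b s => wbar (b, s)) (fun _ _ => 0) b s' := by
          refine le_csInf (hSne b s') ?_
          intro τ hτ
          obtain ⟨d, hd⟩ := hlb b s' τ hτ.2
          have h1 : v b s' ≤ planUtil c wbar y d := heq hcard_eq d b s'
          have h2 := hc d b s'
          rw [hwbe] at hd
          linarith
        have := hp s'
        linarith
  -- assemble the equilibrium
  refine ⟨hfeas, hp, fun b s => hplan.2.1 (b, s), fun _ _ => le_refl 0, ?_, ?_, hcour', hcourn', hps, ?_⟩
  · intro b s hbsd
    have hmem : (b, s) ∈ Ω := (hΩmem (b, s)).2 hbsd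
    have hz := hminTip_new_zero b s hmem
    obtain ⟨hge, hmax, hpay⟩ := hbuy b s hbsd
    have hold0 : minTip c w (fun _ _ => 0) b s = 0 := hpay.symm
    rw [hold0] at hge
    refine ⟨?_, ?_, hz.symm⟩
    · rw [hz]; linarith
    · intro s'
      rw [hz]
      by_cases hns : (b, s') ∈ Ω
      · obtain ⟨d', hd'⟩ := (hΩmem (b, s')).1 hns
        obtain ⟨d, hd⟩ := hbsd
        have hss : s' = s := (hfeas.1 b s' d' s d hd' hd).1
        subst hss
        rw [hminTip_new_zero b s' hns]
      · refine hkey b s' hns (v b s - p s - 0) ?_ (by linarith)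
        have := hmax s'
        rw [hold0] at this
        linarith
  · intro b hb s
    have hns : (b, s) ∉ Ω := by
      intro hmem
      obtain ⟨d, hd⟩ := (hΩmem (b, s)).1 hmem
      exact hb s d hd
    exact hkey b s hns 0 (hbuyn b hb s) (le_refl 0)
  · intro b s hbs
    refine ⟨hzero (b, s) ?_, rfl⟩
    intro hmem
    obtain ⟨d, hd⟩ := (hΩmem (b, s)).1 hmem
    exact hbs d hd

end DeliveryPlatform
end
end

section
/- For every real number K > 0 there exists a market whose courier costs decompose both as c_d(b,s) = c(b,s) + c_d(s) and as c_d(b,s) = c(b,s) + c_d(b) (for suitable nonnegative component functions), in which a without-tip equilibrium exists, the optimal welfare satisfies OPT ≥ K, and every without-tip equilibrium has welfare at most −K. (One such market is the two-buyer, one-store, two-courier market of Example 2.2 with all valuations and costs scaled by K.) -/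
open scoped Classical
noncomputable section

namespace DeliveryPlatform

variable {m n l : ℕ}

/-- For every `K > 0` there is a market whose courier costs
decompose both ways, in which a without-tip equilibrium exists, `OPT ≥ K`, and
every without-tip equilibrium has welfare at most `−K`. -/
theorem without_tip_arbitrarily_bad_decomposable (K : ℝ) (hK : 0 < K) :
    ∃ (m n l : ℕ) (v : Fin m → Fin n → ℝ) (c : Fin l → Fin m → Fin n → ℝ),
      (∀ b s, 0 ≤ v b s) ∧ (∀ d b s, 0 ≤ c d b s) ∧
      (∃ (c0 : Fin m → Fin n → ℝ) (cs : Fin l → Fin n → ℝ),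
        (∀ b s, 0 ≤ c0 b s) ∧ (∀ d s, 0 ≤ cs d s) ∧
        ∀ d b s, c d b s = c0 b s + cs d s) ∧
      (∃ (c0 : Fin m → Fin n → ℝ) (cb : Fin l → Fin m → ℝ),
        (∀ b s, 0 ≤ c0 b s) ∧ (∀ d b, 0 ≤ cb d b) ∧
        ∀ d b s, c d b s = c0 b s + cb d b) ∧
      (∃ (p : Fin n → ℝ) (w : Fin m → Fin n → ℝ) (x : Fin m → Fin n → Fin l → Bool),
        WithoutTipEq v c p w x) ∧
      K ≤ OPT v c ∧
      (∀ (p : Fin n → ℝ) (w : Fin m → Fin n → ℝ) (x : Fin m → Fin n → Fin l → Bool),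
        WithoutTipEq v c p w x → Welfare v c x ≤ -K) := by
  refine ⟨2, 1, 2, (fun b _ => if b = 0 then 3*K else 10*K),
    (fun d b _ => (if b = 0 then 0 else 11*K) + (if d = 0 then 0 else K)),
    ?_, ?_, ?_, ?_, ?_, ?_, ?_⟩
  · intro b s; fin_cases b <;> simp <;> linarith
  · intro d b s; fin_cases d <;> fin_cases b <;> simp <;> linarith
  · exact ⟨(fun b _ => if b = 0 then 0 else 11*K), (fun d _ => if d = 0 then 0 else K),
      by intro b s; fin_cases b <;> simp <;> linarith,
      by intro d s; fin_cases d <;> simp <;> linarith,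
      by intro d b s; rfl⟩
  · exact ⟨(fun b _ => if b = 0 then 0 else 11*K), (fun d _ => if d = 0 then 0 else K),
      by intro b s; fin_cases b <;> simp <;> linarith,
      by intro d b; fin_cases d <;> simp <;> linarith,
      by intro d b s; rfl⟩
  · -- equilibrium existence
    refine ⟨(fun _ => 10*K), (fun b _ => if b = 0 then 0 else 11*K),
      (fun b _ d => b == 1 && d == 0), ?_⟩
    refine ⟨⟨?_, ?_, ?_⟩, ?_, ?_, ?_, ?_, ?_, ?_, ?_, ?_⟩
    · intro b s d s' d' h h'
      simp only [Bool.and_eq_true, beq_iff_eq] at h h'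
      exact ⟨Subsingleton.elim _ _, h.2.trans h'.2.symm⟩
    · intro b s d b' d' h h'
      simp only [Bool.and_eq_true, beq_iff_eq] at h h'
      exact ⟨h.1.trans h'.1.symm, h.2.trans h'.2.symm⟩
    · intro b s d b' s' h h'
      simp only [Bool.and_eq_true, beq_iff_eq] at h h'
      exact ⟨h.1.trans h'.1.symm, Subsingleton.elim _ _⟩
    · intro s; positivity
    · intro b s; fin_cases b <;> simp <;> linarith
    · intro b s h
      obtain ⟨d, hd⟩ := h
      simp only [Bool.and_eq_true, beq_iff_eq] at hd
      obtain ⟨hdb, _⟩ := hd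
      subst hdb
      refine ⟨by simp, ?_⟩
      intro s'
      have : s' = s := Subsingleton.elim _ _
      simp [this]
    · intro b hb s
      have hb1 : b = 0 := by
        by_contra h
        have hb2 : b = 1 := by omega
        exact hb s 0 (by simp [hb2])
      subst hb1
      simp; linarith
    · intro d b s h
      simp only [Bool.and_eq_true, beq_iff_eq] at h
      obtain ⟨hb, hd⟩ := h; subst hb; subst hd
      constructor
      · simp
      · intro b' s'; fin_cases b' <;> simp <;> linarith
    · intro d hd b s
      have hd1 : d = 1 := by
        by_contra h
        have : d = 0 := by omega
        exact hd 1 0 (by simp [this])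
      subst hd1
      fin_cases b <;> simp <;> linarith
    · intro s hs
      exact absurd (hs 1 0) (by simp)
    · intro b s hb
      have hb1 : b = 0 := by
        by_contra h
        have hb2 : b = 1 := by omega
        exact hb 0 (by simp [hb2])
      subst hb1; simp
  · -- OPT ≥ K
    have hmem : (3*K : ℝ) ∈ {r : ℝ | ∃ x : Fin 2 → Fin 1 → Fin 2 → Bool,
        Feasible x ∧ Welfare (fun b _ => if b = 0 then 3*K else 10*K)
          (fun d b _ => (if b = 0 then 0 else 11*K) + (if d = 0 then 0 else K)) x = r} := by
      refine ⟨fun b _ d => b == 0 && d == 0, ⟨⟨?_, ?_, ?_⟩, ?_⟩⟩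
      · intro b s d s' d' h h'
        simp only [Bool.and_eq_true, beq_iff_eq] at h h'
        exact ⟨Subsingleton.elim _ _, h.2.trans h'.2.symm⟩
      · intro b s d b' d' h h'
        simp only [Bool.and_eq_true, beq_iff_eq] at h h'
        exact ⟨h.1.trans h'.1.symm, h.2.trans h'.2.symm⟩
      · intro b s d b' s' h h'
        simp only [Bool.and_eq_true, beq_iff_eq] at h h'
        exact ⟨h.1.trans h'.1.symm, Subsingleton.elim _ _⟩
      · simp [Welfare, Fin.sum_univ_two, Fin.sum_univ_one]
    have hbdd : BddAbove {r : ℝ | ∃ x : Fin 2 → Fin 1 → Fin 2 → Bool,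
        Feasible x ∧ Welfare (fun b _ => if b = 0 then 3*K else 10*K)
          (fun d b _ => (if b = 0 then 0 else 11*K) + (if d = 0 then 0 else K)) x = r} := by
      refine ⟨5*K, ?_⟩
      rintro r ⟨x, _, rfl⟩
      simp only [Welfare, Fin.sum_univ_two, Fin.sum_univ_one]
      cases h00 : x 0 0 0 <;> cases h01 : x 0 0 1 <;> cases h10 : x 1 0 0 <;>
        cases h11 : x 1 0 1 <;>
        simp [h00, h01, h10, h11, Fin.ext_iff] <;> linarith
    have := le_csSup hbdd hmem
    calc K ≤ 3*K := by linarith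
    _ ≤ OPT _ _ := this
  · -- every without-tip equilibrium has welfare ≤ -K
    rintro p w x ⟨hfeas, hp, hw, hbm, hbu, hcm, hcu, hsp, how⟩
    -- some triple must be matched
    have hne : ∃ b d, x b 0 d := by
      by_contra h
      push_neg at h
      have hp0 : p 0 = 0 := hsp 0 (fun b d => by simpa using h b d)
      have := hbu 0 (fun s d => by
        have : s = 0 := Subsingleton.elim _ _
        subst this; simpa using h 0 d) 0
      simp [hp0] at this
      linarith
    obtain ⟨b, d, hbd⟩ := hne
    -- matched buyer must be b = 1
    have hb1 : b = 1 := by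
      by_contra h
      have hb0 : b = 0 := by omega
      subst hb0
      have hun : ∀ s d', ¬ x 1 s d' := by
        intro s d' hx
        have hs : s = 0 := Subsingleton.elim _ _
        subst hs
        have := (hfeas.2.1 0 0 d 1 d' hbd hx).1
        exact absurd this (by simp)
      have h1 := hbu 1 hun 0
      have h2 := (hbm 0 0 ⟨d, hbd⟩).1
      simp at h1 h2
      linarith
    subst hb1
    -- no one else is matched
    have hx0 : ∀ d', ¬ x 0 0 d' := by
      intro d' hx
      have := (hfeas.2.1 1 0 d 0 d' hbd hx).1
      exact absurd this (by simp)
    have hxd : ∀ d', x 1 0 d' → d' = d := by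
      intro d' hx
      exact (hfeas.1 1 0 d' 0 d hx hbd).2
    have hWel : Welfare (fun b _ => if b = 0 then 3*K else 10*K)
        (fun d b _ => (if b = 0 then 0 else 11*K) + (if d = 0 then 0 else K)) x
        = 10*K - (11*K + (if d = 0 then 0 else K)) := by
      simp only [Welfare, Fin.sum_univ_two, Fin.sum_univ_one]
      have e0 : ∀ d', x 0 0 d' = false := fun d' => by
        simpa using hx0 d'
      rw [e0 0, e0 1]
      have hd01 : d = 0 ∨ d = 1 := by omega
      rcases hd01 with rfl | rfl
      · have e1 : x 1 0 1 = false := by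
          by_contra h
          have : x 1 0 1 = true := by
            cases h' : x 1 0 1
            · exact absurd h' h
            · rfl
          have := hxd 1 this
          exact absurd this (by simp)
        rw [e1]
        simp [hbd]
      · have e1 : x 1 0 0 = false := by
          by_contra h
          have : x 1 0 0 = true := by
            cases h' : x 1 0 0
            · exact absurd h' h
            · rfl
          have := hxd 0 this
          exact absurd this (by simp)
        rw [e1]
        simp [hbd]
    rw [hWel]
    split <;> linarith

end DeliveryPlatform
end
end

section
/- For every real number K > 0 there exists a market with single-minded buyers (each buyer has positive valuation for at most one store) in which a without-tip equilibrium exists, the optimal welfare satisfies OPT ≥ K, and every without-tip equilibrium has welfare at most −K. (One such market is the market with buyers b1, b2 valuing the single store s1 at 3K and 10K respectively, and couriers d1, d2 with costs c_{d1}(b1,s1)=0, c_{d1}(b2,s1)=11K, c_{d2}(b1,s1)=K, c_{d2}(b2,s1)=12K.) -/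
open scoped Classical
noncomputable section

namespace DeliveryPlatform

variable {m n l : ℕ}

/-- For every `K > 0` there is a market with single-minded buyers
in which a without-tip equilibrium exists, `OPT ≥ K`, and every without-tip
equilibrium has welfare at most `−K`. -/
theorem without_tip_arbitrarily_bad_single_minded (K : ℝ) (hK : 0 < K) :
    ∃ (m n l : ℕ) (v : Fin m → Fin n → ℝ) (c : Fin l → Fin m → Fin n → ℝ),
      (∀ b s, 0 ≤ v b s) ∧ (∀ d b s, 0 ≤ c d b s) ∧
      (∀ b s s', 0 < v b s → 0 < v b s' → s = s') ∧
      (∃ (p : Fin n → ℝ) (w : Fin m → Fin n → ℝ) (x : Fin m → Fin n → Fin l → Bool),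
        WithoutTipEq v c p w x) ∧
      K ≤ OPT v c ∧
      (∀ (p : Fin n → ℝ) (w : Fin m → Fin n → ℝ) (x : Fin m → Fin n → Fin l → Bool),
        WithoutTipEq v c p w x → Welfare v c x ≤ -K) := by
  refine ⟨2, 1, 2, fun b _ => if b = 0 then 3*K else 10*K,
    fun d b _ => if d = 0 then (if b = 0 then 0 else 11*K) else (if b = 0 then K else 12*K),
    ?_, ?_, ?_, ?_, ?_, ?_⟩
  · intro b s; dsimp only; split_ifs <;> linarith
  · intro d b s; dsimp only; split_ifs <;> linarith
  · intro b s s' _ _; exact Subsingleton.elim s s'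
  · -- existence of a without-tip equilibrium
    refine ⟨fun _ => 10*K, fun b _ => if b = 0 then 0 else 11*K,
      fun b _ d => decide (b = 1 ∧ d = 0), ?_, ?_, ?_, ?_, ?_, ?_, ?_, ?_, ?_⟩
    · refine ⟨?_, ?_, ?_⟩
      · intro b s d s' d' h1 h2
        simp only [decide_eq_true_eq] at h1 h2
        exact ⟨Subsingleton.elim s s', h1.2.trans h2.2.symm⟩
      · intro b s d b' d' h1 h2
        simp only [decide_eq_true_eq] at h1 h2
        exact ⟨h1.1.trans h2.1.symm, h1.2.trans h2.2.symm⟩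
      · intro b s d b' s' h1 h2
        simp only [decide_eq_true_eq] at h1 h2
        exact ⟨h1.1.trans h2.1.symm, Subsingleton.elim s s'⟩
    · intro s; dsimp only; linarith
    · intro b s; dsimp only; split_ifs <;> linarith
    · rintro b s ⟨d, hd⟩
      simp only [decide_eq_true_eq] at hd
      obtain ⟨hb1, -⟩ := hd
      subst hb1
      constructor
      · dsimp only; norm_num
      · intro s'; dsimp only; norm_num
    · intro b _ s
      dsimp only; split_ifs <;> linarith
    · intro d b s hx
      simp only [decide_eq_true_eq] at hx
      obtain ⟨hb1, hd1⟩ := hx; subst hb1; subst hd1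
      constructor
      · dsimp only; norm_num
      · intro b' s'; dsimp only
        fin_cases b' <;> norm_num
    · intro d hd b s
      have hd1 : d = 1 := by
        have h10 := hd 1 0
        simp only [decide_eq_true_eq] at h10
        fin_cases d <;> simp_all
      subst hd1
      fin_cases b <;> dsimp only <;> norm_num <;> linarith
    · intro s h
      exact absurd (by simp : (decide ((1:Fin 2) = 1 ∧ (0:Fin 2) = 0) : Bool) = true) (h 1 0)
    · intro b s h
      fin_cases b
      · dsimp only; norm_num
      · exact absurd (by simp : (decide ((1:Fin 2) = 1 ∧ (0:Fin 2) = 0) : Bool) = true) (h 0)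
  · -- OPT ≥ K
    have hmem : (3*K : ℝ) ∈ {r : ℝ | ∃ x : Fin 2 → Fin 1 → Fin 2 → Bool, Feasible x ∧
        Welfare (fun b _ => if b = 0 then 3*K else 10*K)
          (fun d b _ => if d = 0 then (if b = 0 then 0 else 11*K) else (if b = 0 then K else 12*K)) x = r} := by
      refine ⟨fun b _ d => decide (b = 0 ∧ d = 0), ⟨?_, ?_, ?_⟩, ?_⟩
      · intro b s d s' d' h1 h2
        simp only [decide_eq_true_eq] at h1 h2
        exact ⟨Subsingleton.elim s s', h1.2.trans h2.2.symm⟩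
      · intro b s d b' d' h1 h2
        simp only [decide_eq_true_eq] at h1 h2
        exact ⟨h1.1.trans h2.1.symm, h1.2.trans h2.2.symm⟩
      · intro b s d b' s' h1 h2
        simp only [decide_eq_true_eq] at h1 h2
        exact ⟨h1.1.trans h2.1.symm, Subsingleton.elim s s'⟩
      · simp [Welfare, Fin.sum_univ_two, Fin.sum_univ_one]
    have hbdd : BddAbove {r : ℝ | ∃ x : Fin 2 → Fin 1 → Fin 2 → Bool, Feasible x ∧
        Welfare (fun b _ => if b = 0 then 3*K else 10*K)
          (fun d b _ => if d = 0 then (if b = 0 then 0 else 11*K) else (if b = 0 then K else 12*K)) x = r} := by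
      refine ⟨40*K, ?_⟩
      rintro r ⟨x, -, rfl⟩
      simp only [Welfare, Fin.sum_univ_two, Fin.sum_univ_one]
      norm_num
      split_ifs <;> linarith
    have := le_csSup hbdd hmem
    unfold OPT
    linarith
  · -- every without-tip equilibrium has welfare ≤ -K
    rintro p w x ⟨hfeas, hp, hw, hbuy, hunb, hcour, hidle, hstore, hord⟩
    -- buyer 1 (the 10K buyer) is matched in every equilibrium
    have hmatched : ∃ d, x 1 0 d := by
      by_contra h
      push_neg at h
      have hb1 : ∀ s d, ¬ x 1 s d = true := by
        intro s d
        have : s = 0 := Subsingleton.elim s 0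
        subst this; exact h d
      have h10 : (if (1:Fin 2) = 0 then 3*K else 10*K) - p 0 ≤ 0 := hunb 1 hb1 0
      norm_num at h10
      by_cases h0 : ∃ d, x 0 0 d
      · have := (hbuy 0 0 h0).1
        norm_num at this
        linarith
      · push_neg at h0
        have : p 0 = 0 := by
          apply hstore
          intro b d
          fin_cases b
          · exact h0 d
          · exact h d
        linarith
    obtain ⟨d0, hx1⟩ := hmatched
    -- buyer 0 is unmatched (single store of unit supply)
    have hb0 : ∀ d, ¬ x 0 0 d = true := by
      intro d hx
      have := (hfeas.2.1 1 0 d0 0 d hx1 hx).1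
      exact absurd this (by decide)
    simp only [Welfare, Fin.sum_univ_two, Fin.sum_univ_one]
    rw [if_neg (hb0 0), if_neg (hb0 1)]
    have hnot2 : ¬ (x 1 0 0 = true ∧ x 1 0 1 = true) := by
      rintro ⟨ha, hb⟩
      have := (hfeas.1 1 0 0 0 1 ha hb).2
      exact absurd this (by decide)
    cases ha : x 1 0 0 <;> cases hb : x 1 0 1 <;> norm_num <;> try linarith
    · -- both false: contradicts hx1
      exfalso
      fin_cases d0 <;> simp_all

end DeliveryPlatform
end
end

section
/- Fix delivery compensations w, a buyer b, a store s, and the tips t_{b's'} of all buyers b' ≠ b. Define t̲_{bs} as the minimum over τ ≥ 0 such that there exist tips t_b for buyer b with t_{bs} = τ and a courier d for whom (b,s) is a utility-maximizing order under (w, t_b, t_{−b}) with nonnegative utility. Then t̲_{bs} = min_d max{0, c_d(b,s) − w_{bs}, max_{(b',s') ≠ (b,s)} (w_{b's'} + t_{b's'} − c_d(b',s') − w_{bs} + c_d(b,s))}, where in the inner maximum t_{bs'} = 0 for every store s' ≠ s; moreover, the minimum is attained by taking t_{bs'} = 0 for all s' ≠ s. -/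
open scoped Classical
noncomputable section

namespace DeliveryPlatform

variable {m n l : ℕ}

/-- Closed form for the minimum tip
`t̲_{bs} = min_d max{0, c_d(b,s) − w_{bs},
  max_{(b',s') ≠ (b,s)} (w_{b's'} + t_{b's'} − c_d(b',s') − w_{bs} + c_d(b,s))}`,
where in the inner maximum `t_{bs'} = 0` for every store `s' ≠ s`; moreover the
minimum is attained by a tip vector that is zero away from `s`. -/
theorem min_tip_closed_form
    (hl : 0 < l)
    (c : Fin l → Fin m → Fin n → ℝ) (hc : ∀ d b s, 0 ≤ c d b s)
    (w t : Fin m → Fin n → ℝ) (hw : ∀ b s, 0 ≤ w b s) (ht : ∀ b s, 0 ≤ t b s)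
    (b : Fin m) (s : Fin n) :
    minTip c w t b s =
      sInf (Set.range fun d : Fin l =>
        max 0 (max (c d b s - w b s)
          (sSup ((fun o : Fin m × Fin n =>
              w o.1 o.2 + (if o.1 = b then 0 else t o.1 o.2) - c d o.1 o.2
                - w b s + c d b s) ''
            {o : Fin m × Fin n | o ≠ (b, s)})))) ∧
    ∃ tb : Fin n → ℝ, (∀ s', 0 ≤ tb s') ∧ tb s = minTip c w t b s ∧
      (∀ s', s' ≠ s → tb s' = 0) ∧
      ∃ d, InBR c w (updateTips t b tb) d b s := by
  classical
  set S : Fin l → Set ℝ := fun d =>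
    (fun o : Fin m × Fin n =>
        w o.1 o.2 + (if o.1 = b then 0 else t o.1 o.2) - c d o.1 o.2
          - w b s + c d b s) '' {o : Fin m × Fin n | o ≠ (b, s)} with hS
  set M : Fin l → ℝ := fun d => max 0 (max (c d b s - w b s) (sSup (S d))) with hM
  have hSbdd : ∀ d, BddAbove (S d) := fun d => ((Set.toFinite _).image _).bddAbove
  have hM0 : ∀ d, 0 ≤ M d := fun d => le_max_left _ _
  -- Step 1: membership witness for each courier d
  have hA : ∀ d, ∃ tb : Fin n → ℝ, (∀ s', 0 ≤ tb s') ∧ tb s = M d ∧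
      (∀ s', s' ≠ s → tb s' = 0) ∧ InBR c w (updateTips t b tb) d b s := by
    intro d
    refine ⟨fun s' => if s' = s then M d else 0, ?_, by simp, fun s' h => if_neg h, ?_, ?_⟩
    · intro s'; dsimp only; split
      · exact hM0 d
      · exact le_refl 0
    · have h1 : c d b s - w b s ≤ M d := le_trans (le_max_left _ _) (le_max_right _ _)
      have hbs : updateTips t b (fun s' => if s' = s then M d else 0) b s = M d := by
        simp [updateTips]
      simp only [cUtil, hbs]
      linarith
    · intro b' s'
      by_cases h : (b', s') = (b, s)
      · rw [Prod.mk.injEq] at h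
        rw [h.1, h.2]
      · have hmem : ((b', s') : Fin m × Fin n) ∈ {o : Fin m × Fin n | o ≠ (b, s)} := h
        have he : (w b' s' + (if b' = b then 0 else t b' s') - c d b' s'
            - w b s + c d b s) ∈ S d := ⟨(b', s'), hmem, rfl⟩
        have h2 : w b' s' + (if b' = b then 0 else t b' s') - c d b' s'
            - w b s + c d b s ≤ M d :=
          le_trans (le_csSup (hSbdd d) he) (le_trans (le_max_right _ _) (le_max_right _ _))
        have hts : updateTips t b (fun s' => if s' = s then M d else 0) b' s'
            = (if b' = b then 0 else t b' s') := by
          by_cases hb : b' = b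
          · have hs' : s' ≠ s := by
              intro hss; exact h (by rw [hb, hss])
            simp [updateTips, hb, hs']
          · simp [updateTips, hb]
        have hbs : updateTips t b (fun s' => if s' = s then M d else 0) b s = M d := by
          simp [updateTips]
        simp only [cUtil, hts, hbs]
        linarith
  -- The lower-bound direction
  have hLB : ∀ τ ∈ {τ : ℝ | 0 ≤ τ ∧ ∃ tb : Fin n → ℝ, (∀ s', 0 ≤ tb s') ∧ tb s = τ ∧
      ∃ d, InBR c w (updateTips t b tb) d b s}, ∃ d, M d ≤ τ := by
    rintro τ ⟨hτ0, tb, htb, hts, d, hbr⟩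
    refine ⟨d, ?_⟩
    have hu : cUtil c w (updateTips t b tb) d b s = w b s + τ - c d b s := by
      simp [cUtil, updateTips, hts]
    refine max_le hτ0 (max_le ?_ ?_)
    · have := hbr.1; rw [hu] at this; linarith
    · refine Real.sSup_le ?_ hτ0
      rintro e ⟨⟨b', s'⟩, hmem, rfl⟩
      have hle := hbr.2 b' s'
      rw [hu] at hle
      have htle : (if b' = b then 0 else t b' s') ≤ updateTips t b tb b' s' := by
        by_cases hb : b' = b
        · simp [updateTips, hb, htb]
        · simp [updateTips, hb]
      simp only [cUtil] at hle
      dsimp only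
      linarith
  -- the minimizing courier
  have hne : (Finset.univ : Finset (Fin l)).Nonempty := ⟨⟨0, hl⟩, Finset.mem_univ _⟩
  obtain ⟨d₀, -, hd₀⟩ := Finset.exists_min_image Finset.univ M hne
  have hInfRange : sInf (Set.range M) = M d₀ := by
    refine le_antisymm (csInf_le (Set.finite_range M).bddBelow ⟨d₀, rfl⟩) ?_
    refine le_csInf ⟨M d₀, d₀, rfl⟩ ?_
    rintro x ⟨d, rfl⟩
    exact hd₀ d (Finset.mem_univ d)
  obtain ⟨tb₀, htb₀, hts₀, hz₀, hbr₀⟩ := hA d₀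
  have hmem₀ : M d₀ ∈ {τ : ℝ | 0 ≤ τ ∧ ∃ tb : Fin n → ℝ, (∀ s', 0 ≤ tb s') ∧ tb s = τ ∧
      ∃ d, InBR c w (updateTips t b tb) d b s} :=
    ⟨hM0 d₀, tb₀, htb₀, hts₀, d₀, hbr₀⟩
  have hminTip : minTip c w t b s = M d₀ := by
    refine le_antisymm (csInf_le ⟨0, fun τ hτ => hτ.1⟩ hmem₀) ?_
    refine le_csInf ⟨M d₀, hmem₀⟩ ?_
    intro τ hτ
    obtain ⟨d, hd⟩ := hLB τ hτ
    exact le_trans (hd₀ d (Finset.mem_univ d)) hd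
  constructor
  · rw [hminTip, hInfRange]
  · exact ⟨tb₀, htb₀, by rw [hminTip, hts₀], hz₀, d₀, hbr₀⟩

end DeliveryPlatform
end
end

section
/- First welfare theorem for three-sided competitive equilibrium: if (ψ*, p*) is a competitive equilibrium, then the set of trades ψ* maximizes total welfare Σ_{ω ∈ ψ*} Σ_{a ∈ ω} v^a(ω); moreover it does so even over all fractional solutions, i.e., Σ_{ω ∈ ψ*} Σ_{a ∈ ω} v^a(ω) ≥ Σ_{ω ∈ Ω} x_ω · Σ_{a ∈ ω} v^a(ω) for every x : Ω → [0,1] satisfying, for each agent a, Σ_{ω containing a} x_ω ≤ 1. -/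
open scoped Classical
noncomputable section

namespace ThreeSidedCE

/-- One-sided bound: the fractional value credited to one side is at most
the total equilibrium surplus of that side. -/
lemma side_bound {Ω : Type*} [Fintype Ω] {n : ℕ} (π : Ω → Fin n) (w : Ω → ℝ)
    (ψ : Finset Ω)
    (hinj : ∀ ω ∈ ψ, ∀ ω' ∈ ψ, π ω = π ω' → ω = ω')
    (hw : ∀ ω ∈ ψ, 0 ≤ w ω ∧ ∀ ω', π ω' = π ω → w ω' ≤ w ω)
    (hout : ∀ i, (∀ ω ∈ ψ, π ω ≠ i) → ∀ ω', π ω' = i → w ω' ≤ 0)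
    (x : Ω → ℝ) (hx0 : ∀ ω, 0 ≤ x ω)
    (hcap : ∀ i, ∑ ω ∈ Finset.univ.filter (fun ω => π ω = i), x ω ≤ 1) :
    ∑ ω, x ω * w ω ≤ ∑ ω ∈ ψ, w ω := by
  set u : Fin n → ℝ := fun i => ∑ ω ∈ ψ.filter (fun ω => π ω = i), w ω with hu
  have hu0 : ∀ i, 0 ≤ u i := by
    intro i
    apply Finset.sum_nonneg
    intro ω hω
    exact (hw ω (Finset.mem_filter.mp hω).1).1
  have hub : ∀ ω', w ω' ≤ u (π ω') := by
    intro ω'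
    by_cases h : ∃ ω ∈ ψ, π ω = π ω'
    · obtain ⟨ω, hωψ, hπ⟩ := h
      have heq : u (π ω') = w ω := by
        apply Finset.sum_eq_single_of_mem
        · exact Finset.mem_filter.mpr ⟨hωψ, hπ⟩
        · intro b hb hbne
          exact absurd (hinj b (Finset.mem_filter.mp hb).1 ω hωψ
            ((Finset.mem_filter.mp hb).2.trans hπ.symm)) hbne
      rw [heq]
      exact (hw ω hωψ).2 ω' hπ.symm
    · push_neg at h
      have := hout (π ω') h ω' rfl
      calc w ω' ≤ 0 := this
        _ ≤ u (π ω') := hu0 _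
  have hsumu : ∑ i, u i = ∑ ω ∈ ψ, w ω := by
    rw [hu]
    exact Finset.sum_fiberwise ψ π w
  calc ∑ ω, x ω * w ω ≤ ∑ ω, x ω * u (π ω) := by
        apply Finset.sum_le_sum
        intro ω _
        exact mul_le_mul_of_nonneg_left (hub ω) (hx0 ω)
    _ = ∑ i, ∑ ω ∈ Finset.univ.filter (fun ω => π ω = i), x ω * u (π ω) :=
        (Finset.sum_fiberwise Finset.univ π _).symm
    _ ≤ ∑ i, u i := by
        apply Finset.sum_le_sum
        intro i _
        have : ∑ ω ∈ Finset.univ.filter (fun ω => π ω = i), x ω * u (π ω)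
            = (∑ ω ∈ Finset.univ.filter (fun ω => π ω = i), x ω) * u i := by
          rw [Finset.sum_mul]
          apply Finset.sum_congr rfl
          intro ω hω
          rw [(Finset.mem_filter.mp hω).2]
        rw [this]
        calc (∑ ω ∈ Finset.univ.filter (fun ω => π ω = i), x ω) * u i
            ≤ 1 * u i := mul_le_mul_of_nonneg_right (hcap i) (hu0 i)
          _ = u i := one_mul _
    _ = ∑ ω ∈ ψ, w ω := hsumu


/-- First welfare theorem for three-sided competitive equilibrium.
Agents are buyers, stores and couriers, each indexed by `Fin n`; a trade
`ω = (i, j, k)` involves buyer `ω.1`, store `ω.2.1` and courier `ω.2.2`, with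
valuations `vB ω`, `vS ω`, `vD ω` for its three participants and payments
`pB ω`, `pS ω`, `pD ω`. If `(ψ, p)` is a competitive equilibrium (budget-balanced
prices, no agent in more than one trade, every participating agent weakly
prefers her trade to every trade involving her and to not trading, and every
non-participating agent weakly prefers not trading), then `ψ` maximizes total
welfare over all matchings, and indeed over all fractional solutions. -/
theorem first_welfare_theorem_three_sided
    (n : ℕ)
    (vB vS vD : Fin n × Fin n × Fin n → ℝ)
    (pB pS pD : Fin n × Fin n × Fin n → ℝ)
    (hbal : ∀ ω, pB ω + pS ω + pD ω = 0)
    (ψ : Finset (Fin n × Fin n × Fin n))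
    (hdisj : ∀ ω ∈ ψ, ∀ ω' ∈ ψ,
      (ω.1 = ω'.1 ∨ ω.2.1 = ω'.2.1 ∨ ω.2.2 = ω'.2.2) → ω = ω')
    (hB : ∀ ω ∈ ψ, 0 ≤ vB ω - pB ω ∧
      ∀ ω', ω'.1 = ω.1 → vB ω' - pB ω' ≤ vB ω - pB ω)
    (hS : ∀ ω ∈ ψ, 0 ≤ vS ω - pS ω ∧
      ∀ ω', ω'.2.1 = ω.2.1 → vS ω' - pS ω' ≤ vS ω - pS ω)
    (hD : ∀ ω ∈ ψ, 0 ≤ vD ω - pD ω ∧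
      ∀ ω', ω'.2.2 = ω.2.2 → vD ω' - pD ω' ≤ vD ω - pD ω)
    (hBout : ∀ i : Fin n, (∀ ω ∈ ψ, ω.1 ≠ i) →
      ∀ ω', ω'.1 = i → vB ω' - pB ω' ≤ 0)
    (hSout : ∀ j : Fin n, (∀ ω ∈ ψ, ω.2.1 ≠ j) →
      ∀ ω', ω'.2.1 = j → vS ω' - pS ω' ≤ 0)
    (hDout : ∀ k : Fin n, (∀ ω ∈ ψ, ω.2.2 ≠ k) →
      ∀ ω', ω'.2.2 = k → vD ω' - pD ω' ≤ 0) :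
    (∀ ψ' : Finset (Fin n × Fin n × Fin n),
      (∀ ω ∈ ψ', ∀ ω' ∈ ψ',
        (ω.1 = ω'.1 ∨ ω.2.1 = ω'.2.1 ∨ ω.2.2 = ω'.2.2) → ω = ω') →
      ∑ ω ∈ ψ', (vB ω + vS ω + vD ω) ≤ ∑ ω ∈ ψ, (vB ω + vS ω + vD ω)) ∧
    (∀ x : Fin n × Fin n × Fin n → ℝ,
      (∀ ω, 0 ≤ x ω ∧ x ω ≤ 1) →
      (∀ i : Fin n, ∑ ω ∈ Finset.univ.filter (fun ω => ω.1 = i), x ω ≤ 1) →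
      (∀ j : Fin n, ∑ ω ∈ Finset.univ.filter (fun ω => ω.2.1 = j), x ω ≤ 1) →
      (∀ k : Fin n, ∑ ω ∈ Finset.univ.filter (fun ω => ω.2.2 = k), x ω ≤ 1) →
      ∑ ω : Fin n × Fin n × Fin n, x ω * (vB ω + vS ω + vD ω) ≤
        ∑ ω ∈ ψ, (vB ω + vS ω + vD ω)) := by

  have frac : ∀ x : Fin n × Fin n × Fin n → ℝ,
      (∀ ω, 0 ≤ x ω) →
      (∀ i : Fin n, ∑ ω ∈ Finset.univ.filter (fun ω => ω.1 = i), x ω ≤ 1) →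
      (∀ j : Fin n, ∑ ω ∈ Finset.univ.filter (fun ω => ω.2.1 = j), x ω ≤ 1) →
      (∀ k : Fin n, ∑ ω ∈ Finset.univ.filter (fun ω => ω.2.2 = k), x ω ≤ 1) →
      ∑ ω : Fin n × Fin n × Fin n, x ω * (vB ω + vS ω + vD ω) ≤
        ∑ ω ∈ ψ, (vB ω + vS ω + vD ω) := by
    intro x hx0 hcB hcS hcD
    have hW : ∀ ω, vB ω + vS ω + vD ω
        = (vB ω - pB ω) + (vS ω - pS ω) + (vD ω - pD ω) := by
      intro ω; have := hbal ω; linarith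
    have h1 := side_bound (fun ω => ω.1) (fun ω => vB ω - pB ω) ψ
      (fun ω hω ω' hω' h => hdisj ω hω ω' hω' (Or.inl h)) hB hBout x hx0 hcB
    have h2 := side_bound (fun ω => ω.2.1) (fun ω => vS ω - pS ω) ψ
      (fun ω hω ω' hω' h => hdisj ω hω ω' hω' (Or.inr (Or.inl h))) hS hSout x hx0 hcS
    have h3 := side_bound (fun ω => ω.2.2) (fun ω => vD ω - pD ω) ψ
      (fun ω hω ω' hω' h => hdisj ω hω ω' hω' (Or.inr (Or.inr h))) hD hDout x hx0 hcD
    calc ∑ ω : Fin n × Fin n × Fin n, x ω * (vB ω + vS ω + vD ω)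
        = ∑ ω : Fin n × Fin n × Fin n,
            (x ω * (vB ω - pB ω) + x ω * (vS ω - pS ω) + x ω * (vD ω - pD ω)) := by
          apply Finset.sum_congr rfl; intro ω _; rw [hW ω]; ring
      _ = (∑ ω : Fin n × Fin n × Fin n, x ω * (vB ω - pB ω))
          + (∑ ω : Fin n × Fin n × Fin n, x ω * (vS ω - pS ω))
          + (∑ ω : Fin n × Fin n × Fin n, x ω * (vD ω - pD ω)) := by
          rw [← Finset.sum_add_distrib, ← Finset.sum_add_distrib]
      _ ≤ (∑ ω ∈ ψ, (vB ω - pB ω)) + (∑ ω ∈ ψ, (vS ω - pS ω))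
          + (∑ ω ∈ ψ, (vD ω - pD ω)) := by
          exact add_le_add (add_le_add h1 h2) h3
      _ = ∑ ω ∈ ψ, (vB ω + vS ω + vD ω) := by
          rw [← Finset.sum_add_distrib, ← Finset.sum_add_distrib]
          apply Finset.sum_congr rfl; intro ω _; rw [hW ω]
  constructor
  · intro ψ' hdisj'
    set x : Fin n × Fin n × Fin n → ℝ := fun ω => if ω ∈ ψ' then 1 else 0 with hxdef
    have hx0 : ∀ ω, 0 ≤ x ω := by
      intro ω; simp only [hxdef]; split <;> norm_num
    have hcap : ∀ (π : Fin n × Fin n × Fin n → Fin n),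
        (∀ ω ∈ ψ', ∀ ω'' ∈ ψ', π ω = π ω'' → ω = ω'') →
        ∀ i, ∑ ω ∈ Finset.univ.filter (fun ω => π ω = i), x ω ≤ 1 := by
      intro π hπ i
      have : ∑ ω ∈ Finset.univ.filter (fun ω => π ω = i), x ω
          = ((Finset.univ.filter (fun ω => π ω = i)).filter (fun ω => ω ∈ ψ')).card := by
        simp [hxdef, Finset.sum_ite, Finset.filter_filter, Finset.filter_mem_eq_inter, Finset.inter_comm]
        congr 1
        ext a
        simp [Finset.mem_inter, and_comm]
      rw [this]
      have hle : ((Finset.univ.filter (fun ω => π ω = i)).filter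
          (fun ω => ω ∈ ψ')).card ≤ 1 := by
        apply Finset.card_le_one.mpr
        intro a ha b hb
        simp only [Finset.mem_filter, Finset.mem_univ, true_and] at ha hb
        exact hπ a ha.2 b hb.2 (ha.1.trans hb.1.symm)
      exact_mod_cast hle
    have key := frac x hx0
      (hcap (fun ω => ω.1) (fun ω hω ω'' hω'' h => hdisj' ω hω ω'' hω'' (Or.inl h)))
      (hcap (fun ω => ω.2.1)
        (fun ω hω ω'' hω'' h => hdisj' ω hω ω'' hω'' (Or.inr (Or.inl h))))
      (hcap (fun ω => ω.2.2)
        (fun ω hω ω'' hω'' h => hdisj' ω hω ω'' hω'' (Or.inr (Or.inr h))))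
    have hsum : ∑ ω : Fin n × Fin n × Fin n, x ω * (vB ω + vS ω + vD ω)
        = ∑ ω ∈ ψ', (vB ω + vS ω + vD ω) := by
      simp [hxdef, ite_mul, Finset.sum_ite_mem]
    rwa [hsum] at key
  · intro x hx hcB hcS hcD
    exact frac x (fun ω => (hx ω).1) hcB hcS hcD


end ThreeSidedCE
end
end
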